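/- For all integers n and k, qbinom(n,k) evaluated at q⁻¹ satisfies qbinom(n,k)(q) = q^{k(n-k)} · qbinom(n,k)(q⁻¹) as Laurent polynomials, i.e., the self-reciprocity of the Gaussian binomial extends to all integer entries. -/
import Mathlib


open LaurentPolynomial in
/-- The ordinary Gaussian binomial coefficient as a (Laurent) polynomial in `q = T 1`,
defined by the `q`-Pascal rule; it is `0` when the lower entry exceeds the upper one. -/
noncomputable def gauss : ℕ → ℕ → LaurentPolynomial ℤ
  | _, 0 => 1
  | 0, _ + 1 => 0
  | a + 1, b + 1 => gauss a b + T ((b : ℤ) + 1) * gauss a (b + 1)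


open LaurentPolynomial

lemma gauss_zero (a : ℕ) : gauss a 0 = 1 := by cases a <;> rfl

lemma gauss_zero_succ (b : ℕ) : gauss 0 (b+1) = 0 := rfl

lemma gauss_succ (a b : ℕ) :
    gauss (a+1) (b+1) = gauss a b + T ((b : ℤ) + 1) * gauss a (b + 1) := rfl

lemma gauss_pascal' (a b : ℕ) :
    gauss (a+1) (b+1) = T ((a:ℤ) - b) * gauss a b + gauss a (b+1) := by
  induction a generalizing b with
  | zero =>
    cases b with
    | zero => simp [gauss_succ, gauss_zero, gauss_zero_succ]
    | succ b => simp [gauss_succ, gauss_zero_succ]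
  | succ a ih =>
    cases b with
    | zero =>
      conv_lhs => rw [gauss_succ, ih 0]
      conv_rhs => rw [gauss_succ]
      simp only [gauss_zero, mul_add, mul_one, ← mul_assoc, ← T_add]
      push_cast
      ring_nf
    | succ b =>
      conv_lhs => rw [gauss_succ, ih b, ih (b+1)]
      conv_rhs => rw [gauss_succ a, gauss_succ a]
      simp only [mul_add, ← mul_assoc, ← T_add]
      push_cast
      ring_nf

lemma invert_of_self {f : LaurentPolynomial ℤ} {e : ℤ} (h : f = T e * invert f) :
    invert f = T (-e) * f := by
  conv_lhs => rw [h]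
  rw [map_mul, invert_T, involutive_invert f]

lemma gauss_invert (a b : ℕ) :
    gauss a b = T ((b:ℤ) * ((a:ℤ) - b)) * invert (gauss a b) := by
  induction a generalizing b with
  | zero =>
    cases b with
    | zero => simp [gauss_zero]
    | succ b => simp [gauss_zero_succ]
  | succ a ih =>
    cases b with
    | zero => simp [gauss_zero]
    | succ b =>
      have h1 : invert (gauss a b) = T (-((b:ℤ) * ((a:ℤ) - b))) * gauss a b :=
        invert_of_self (ih b)
      have h2 : invert (gauss a (b+1)) =
          T (-(((b:ℤ)+1) * ((a:ℤ) - ((b:ℤ)+1)))) * gauss a (b+1) := by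
        have := invert_of_self (ih (b+1))
        push_cast at this ⊢
        exact this
      conv_lhs => rw [gauss_pascal']
      conv_rhs => rw [gauss_succ]
      simp only [map_add, map_mul, invert_T, h1, h2, mul_add, ← mul_assoc, ← T_add]
      push_cast
      ring_nf
      simp [T_zero]

open LaurentPolynomial in
/-- The generalized `q`-binomial coefficient, a Laurent polynomial in `q = T 1`,
extended to arbitrary integer entries. -/
noncomputable def qbinom (n k : ℤ) : LaurentPolynomial ℤ :=
  if 0 ≤ k ∧ k ≤ n then gauss n.toNat k.toNat
  else if n < 0 ∧ 0 ≤ k then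
    (-1) ^ k.toNat * T (k * (2 * n - k + 1) / 2) * gauss (k - n - 1).toNat k.toNat
  else if k ≤ n ∧ n < 0 then
    (-1) ^ (n - k).toNat * T ((n * (n + 1) - k * (k + 1)) / 2) *
      gauss (-k - 1).toNat (-n - 1).toNat
  else 0

open LaurentPolynomial in
theorem qbinom_invert (n k : ℤ) :
    qbinom n k = T (k * (n - k)) * invert (qbinom n k) := by
  unfold qbinom
  split_ifs with h1 h2 h3
  · have hk : ((k.toNat : ℤ)) = k := Int.toNat_of_nonneg h1.1
    have hn : ((n.toNat : ℤ)) = n := Int.toNat_of_nonneg (h1.1.trans h1.2)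
    have := gauss_invert n.toNat k.toNat
    rw [hk, hn] at this
    exact this
  · have hk : ((k.toNat : ℤ)) = k := Int.toNat_of_nonneg h2.2
    have hm : (((k - n - 1).toNat : ℤ)) = k - n - 1 := Int.toNat_of_nonneg (by omega)
    have hg : invert (gauss (k - n - 1).toNat k.toNat) =
        T (-(k * (k - n - 1 - k))) * gauss (k - n - 1).toNat k.toNat := by
      have := invert_of_self (gauss_invert (k - n - 1).toNat k.toNat)
      rwa [hk, hm] at this
    have hdvd : 2 ∣ k * (2 * n - k + 1) := by
      rcases Int.even_mul_succ_self (k - 1) with ⟨c, hc⟩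
      exact ⟨k * n - c, by linear_combination -hc⟩
    have h2e : 2 * (k * (2 * n - k + 1) / 2) = k * (2 * n - k + 1) :=
      Int.mul_ediv_cancel' hdvd
    rw [map_mul, map_mul, invert_T, hg]
    rw [map_pow, map_neg, map_one]
    rw [show ((-1 : LaurentPolynomial ℤ) ^ k.toNat * T (-(k * (2 * n - k + 1) / 2)) *
        (T (-(k * (k - n - 1 - k))) * gauss (k - n - 1).toNat k.toNat)) =
        (-1) ^ k.toNat * (T (-(k * (2 * n - k + 1) / 2)) * T (-(k * (k - n - 1 - k)))) *
        gauss (k - n - 1).toNat k.toNat by ring]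
    rw [← T_add]
    rw [show (T (k * (n - k)) * ((-1 : LaurentPolynomial ℤ) ^ k.toNat *
        T (-(k * (2 * n - k + 1) / 2) + -(k * (k - n - 1 - k))) *
        gauss (k - n - 1).toNat k.toNat)) =
        (-1) ^ k.toNat * (T (k * (n - k)) *
        T (-(k * (2 * n - k + 1) / 2) + -(k * (k - n - 1 - k)))) *
        gauss (k - n - 1).toNat k.toNat by ring]
    rw [← T_add]
    congr 2
    · congr 1
      linear_combination h2e
  · have hnk : (((n - k).toNat : ℤ)) = n - k := Int.toNat_of_nonneg (by omega)
    have hA : (((-k - 1).toNat : ℤ)) = -k - 1 := Int.toNat_of_nonneg (by omega)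
    have hB : (((-n - 1).toNat : ℤ)) = -n - 1 := Int.toNat_of_nonneg (by omega)
    have hg : invert (gauss (-k - 1).toNat (-n - 1).toNat) =
        T (-((-n - 1) * (-k - 1 - (-n - 1)))) * gauss (-k - 1).toNat (-n - 1).toNat := by
      have := invert_of_self (gauss_invert (-k - 1).toNat (-n - 1).toNat)
      rwa [hA, hB] at this
    have hdvd : 2 ∣ n * (n + 1) - k * (k + 1) := by
      rcases Int.even_mul_succ_self n with ⟨c, hc⟩
      rcases Int.even_mul_succ_self k with ⟨d, hd⟩
      exact ⟨c - d, by linear_combination hc - hd⟩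
    have h2e : 2 * ((n * (n + 1) - k * (k + 1)) / 2) = n * (n + 1) - k * (k + 1) :=
      Int.mul_ediv_cancel' hdvd
    rw [map_mul, map_mul, invert_T, hg, map_pow, map_neg, map_one]
    rw [show ((-1 : LaurentPolynomial ℤ) ^ (n - k).toNat *
        T (-((n * (n + 1) - k * (k + 1)) / 2)) *
        (T (-((-n - 1) * (-k - 1 - (-n - 1)))) * gauss (-k - 1).toNat (-n - 1).toNat)) =
        (-1) ^ (n - k).toNat * (T (-((n * (n + 1) - k * (k + 1)) / 2)) *
        T (-((-n - 1) * (-k - 1 - (-n - 1))))) * gauss (-k - 1).toNat (-n - 1).toNat by ring]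
    rw [← T_add]
    rw [show (T (k * (n - k)) * ((-1 : LaurentPolynomial ℤ) ^ (n - k).toNat *
        T (-((n * (n + 1) - k * (k + 1)) / 2) + -((-n - 1) * (-k - 1 - (-n - 1)))) *
        gauss (-k - 1).toNat (-n - 1).toNat)) =
        (-1) ^ (n - k).toNat * (T (k * (n - k)) *
        T (-((n * (n + 1) - k * (k + 1)) / 2) + -((-n - 1) * (-k - 1 - (-n - 1))))) *
        gauss (-k - 1).toNat (-n - 1).toNat by ring]
    rw [← T_add]
    congr 2
    · congr 1
      linear_combination h2e
  · simp
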